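/- arXiv:1306.0068 — 6 statements merged into one kernel-verified Lean document; each statement's English description precedes it below -/
import Mathlib

section
/- Let p be a prime, k ≥ 2 an integer, α = √p, and let β be any nonzero complex number. Set μ₁ = p^{k-3/2}(α + α⁻¹ + β + β⁻¹) and μ₂ = p^{2k-3}((α + α⁻¹)² + (α + α⁻¹)(β + β⁻¹) + (β + β⁻¹)² − 2 − 1/p). Then μ₂ = μ₁² − (p^{k-1} + p^{k-2})·μ₁ + p^{2k-2}. -/
/-- Let `p` be a prime, `k ≥ 2` an integer, `α = √p`, and let `β` be any nonzero
complex number. Set `μ₁ = p^(k-3/2) (α + α⁻¹ + β + β⁻¹)` and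
`μ₂ = p^(2k-3) ((α+α⁻¹)² + (α+α⁻¹)(β+β⁻¹) + (β+β⁻¹)² − 2 − 1/p)`.
Then `μ₂ = μ₁² − (p^(k-1) + p^(k-2)) μ₁ + p^(2k-2)`. -/
theorem stmt_4 (p : ℕ) (hp : Nat.Prime p) (k : ℤ) (hk : 2 ≤ k)
    (α : ℂ) (hα : α = (Real.sqrt p : ℂ)) (β : ℂ) (hβ : β ≠ 0)
    (μ₁ μ₂ : ℂ)
    (hμ₁ : μ₁ = (((p : ℝ) ^ ((k : ℝ) - 3 / 2) : ℝ) : ℂ) * (α + α⁻¹ + β + β⁻¹))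
    (hμ₂ : μ₂ = (((p : ℝ) ^ (2 * (k : ℝ) - 3) : ℝ) : ℂ) *
        ((α + α⁻¹) ^ 2 + (α + α⁻¹) * (β + β⁻¹) + (β + β⁻¹) ^ 2 - 2 - (p : ℂ)⁻¹)) :
    μ₂ = μ₁ ^ 2 - ((p : ℂ) ^ (k - 1) + (p : ℂ) ^ (k - 2)) * μ₁ + (p : ℂ) ^ (2 * k - 2) := by
  have hp0 : (0 : ℝ) < (p : ℝ) := by exact_mod_cast hp.pos
  set r : ℝ := (p : ℝ) with hr
  set s : ℂ := (Real.sqrt r : ℂ) with hs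
  set t : ℂ := ((r ^ ((k : ℝ) - 3 / 2) : ℝ) : ℂ) with ht
  have hpC0 : (p : ℂ) ≠ 0 := by exact_mod_cast hp.ne_zero
  have hs2 : s ^ 2 = (p : ℂ) := by
    rw [hs, ← Complex.ofReal_pow, Real.sq_sqrt hp0.le, hr]
    norm_cast
  have hs0 : s ≠ 0 := by
    intro h
    rw [h] at hs2
    simp at hs2
    exact hpC0 hs2.symm
  have hts : t * s = (p : ℂ) ^ (k - 1) := by
    rw [ht, hs, ← Complex.ofReal_mul]
    have h1 : r ^ ((k : ℝ) - 3 / 2) * Real.sqrt r = r ^ (((k - 1 : ℤ) : ℝ)) := by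
      rw [Real.sqrt_eq_rpow, ← Real.rpow_add hp0]
      push_cast
      ring_nf
    rw [h1, Real.rpow_intCast, hr, Complex.ofReal_zpow]
    norm_num
  have ht2 : (((r ^ (2 * (k : ℝ) - 3) : ℝ)) : ℂ) = t ^ 2 := by
    rw [ht, ← Complex.ofReal_pow]
    congr 1
    rw [← Real.rpow_natCast (r ^ ((k : ℝ) - 3 / 2)) 2, ← Real.rpow_mul hp0.le]
    norm_num
    ring_nf
  have htp : (p : ℂ) ^ (k - 2) = t * s⁻¹ := by
    have h1 : (p : ℂ) ^ (k - 1) = (p : ℂ) ^ (k - 2) * (p : ℂ) := by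
      rw [← zpow_add_one₀ hpC0]
      ring_nf
    have h2 : t * s = (p : ℂ) ^ (k - 2) * s ^ 2 := by rw [hts, h1, hs2]
    have h3 : (p : ℂ) ^ (k - 2) * s * s = t * s := by rw [h2]; ring
    have h4 := mul_right_cancel₀ hs0 h3
    rw [← h4]
    field_simp
  have hp2 : (p : ℂ) ^ (2 * k - 2) = (t * s) ^ 2 := by
    rw [hts, ← zpow_natCast ((p : ℂ) ^ (k - 1)) 2, ← zpow_mul]
    ring_nf
  have hpi : (p : ℂ)⁻¹ = (s ^ 2)⁻¹ := by rw [hs2]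
  rw [hμ₂, hμ₁, hα, ht2, htp, hpi, hp2, ← hts]
  have hi : s * s⁻¹ = 1 := mul_inv_cancel₀ hs0
  linear_combination 2 * t ^ 2 * hi
end

section
/- Let p be a prime, k ≥ 2 an integer, and let α, β be nonzero complex numbers. Set μ₁ = p^{k-3/2}(α + α⁻¹ + β + β⁻¹) and μ₂ = p^{2k-3}((α + α⁻¹)² + (α + α⁻¹)(β + β⁻¹) + (β + β⁻¹)² − 2 − 1/p). If μ₂ = μ₁² − (p^{k-1} + p^{k-2})·μ₁ + p^{2k-2}, then α ∈ {p^{1/2}, p^{-1/2}} or β ∈ {p^{1/2}, p^{-1/2}}. -/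
lemma aux_inv_pair (cs x : ℂ) (hcs : cs ≠ 0) (hx : x ≠ 0)
    (h : x + x⁻¹ = cs + cs⁻¹) : x = cs ∨ x = cs⁻¹ := by
  have hc : cs * cs⁻¹ = 1 := mul_inv_cancel₀ hcs
  have hx' : x * x⁻¹ = 1 := mul_inv_cancel₀ hx
  have h2 : (x - cs) * (cs * x - 1) = 0 := by
    linear_combination cs * x * h - cs * hx' + x * hc
  rcases mul_eq_zero.1 h2 with h3 | h3
  · exact Or.inl (sub_eq_zero.1 h3)
  · right
    have hcx : cs * x = 1 := by linear_combination h3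
    exact eq_inv_of_mul_eq_one_right (by linear_combination hcx)

/-- Let `p` be a prime, `k ≥ 2` an integer, and let `α, β` be nonzero complex
numbers. Set `μ₁ = p^(k-3/2) (α + α⁻¹ + β + β⁻¹)` and
`μ₂ = p^(2k-3) ((α+α⁻¹)² + (α+α⁻¹)(β+β⁻¹) + (β+β⁻¹)² − 2 − 1/p)`.
If `μ₂ = μ₁² − (p^(k-1) + p^(k-2)) μ₁ + p^(2k-2)`, then `α ∈ {p^(1/2), p^(-1/2)}` or
`β ∈ {p^(1/2), p^(-1/2)}`. -/
theorem stmt_6 (p : ℕ) (hp : Nat.Prime p) (k : ℤ) (hk : 2 ≤ k)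
    (α β : ℂ) (hα : α ≠ 0) (hβ : β ≠ 0)
    (μ₁ μ₂ : ℂ)
    (hμ₁ : μ₁ = (((p : ℝ) ^ ((k : ℝ) - 3 / 2) : ℝ) : ℂ) * (α + α⁻¹ + β + β⁻¹))
    (hμ₂ : μ₂ = (((p : ℝ) ^ (2 * (k : ℝ) - 3) : ℝ) : ℂ) *
        ((α + α⁻¹) ^ 2 + (α + α⁻¹) * (β + β⁻¹) + (β + β⁻¹) ^ 2 - 2 - (p : ℂ)⁻¹))
    (hrel : μ₂ = μ₁ ^ 2 - ((p : ℂ) ^ (k - 1) + (p : ℂ) ^ (k - 2)) * μ₁ + (p : ℂ) ^ (2 * k - 2)) :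
    (α = (Real.sqrt p : ℂ) ∨ α = ((Real.sqrt p : ℝ)⁻¹ : ℝ)) ∨
      (β = (Real.sqrt p : ℂ) ∨ β = ((Real.sqrt p : ℝ)⁻¹ : ℝ)) := by
  have hp0 : (0:ℝ) < (p:ℝ) := by exact_mod_cast hp.pos
  set s : ℝ := Real.sqrt p with hsdef
  have hs0 : 0 < s := Real.sqrt_pos.2 hp0
  have hs : s = (p:ℝ) ^ (1/2 : ℝ) := Real.sqrt_eq_rpow (p:ℝ)
  set cs : ℂ := (s : ℂ) with hcsdef
  have hcs0 : cs ≠ 0 := by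
    rw [hcsdef]; exact_mod_cast ne_of_gt hs0
  set rp : ℂ := (((p : ℝ) ^ ((k : ℝ) - 3 / 2) : ℝ) : ℂ) with hrpdef
  have hrp0 : rp ≠ 0 := by
    simp only [hrpdef, ne_eq, Complex.ofReal_eq_zero]
    exact ne_of_gt (Real.rpow_pos_of_pos hp0 _)
  have castpow : ∀ m : ℤ, (p:ℂ) ^ m = (((p:ℝ) ^ ((m:ℤ):ℝ) : ℝ) : ℂ) := by
    intro m
    rw [Real.rpow_intCast]
    push_cast
    ring
  -- real-side rpow arithmetic helpers
  have comb : ∀ a b : ℝ, (p:ℝ) ^ a * (p:ℝ) ^ b = (p:ℝ) ^ (a + b) :=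
    fun a b => (Real.rpow_add hp0 a b).symm
  have sq : ∀ a : ℝ, ((p:ℝ) ^ a) ^ 2 = (p:ℝ) ^ (a * 2) := by
    intro a
    rw [← Real.rpow_natCast ((p:ℝ) ^ a) 2, ← Real.rpow_mul hp0.le]
    norm_num
  have e1 : (((p : ℝ) ^ (2 * (k : ℝ) - 3) : ℝ) : ℂ) = rp ^ 2 := by
    rw [hrpdef, ← Complex.ofReal_pow, sq]
    congr 1
    ring
  have e2 : (p:ℂ) ^ (k - 1) * rp = rp ^ 2 * cs := by
    rw [castpow, hrpdef, hcsdef, hs, ← Complex.ofReal_pow, ← Complex.ofReal_mul,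
      ← Complex.ofReal_mul, sq, comb, comb]
    congr 1
    push_cast
    ring
  have e3 : (p:ℂ) ^ (k - 2) * rp * cs = rp ^ 2 := by
    rw [castpow, hrpdef, hcsdef, hs, ← Complex.ofReal_pow, ← Complex.ofReal_mul,
      ← Complex.ofReal_mul, sq, comb, comb]
    congr 1
    push_cast
    ring
  have e4 : (p:ℂ) ^ (2 * k - 2) = rp ^ 2 * cs ^ 2 := by
    rw [castpow, hrpdef, hcsdef, hs, ← Complex.ofReal_pow, ← Complex.ofReal_pow,
      ← Complex.ofReal_mul, sq, sq, comb]
    congr 1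
    push_cast
    ring
  have e5 : cs ^ 2 = (p:ℂ) := by
    rw [hcsdef]
    exact_mod_cast Real.sq_sqrt hp0.le
  have hpcne : (p:ℂ) ≠ 0 := by
    rw [← e5]; exact pow_ne_zero 2 hcs0
  have ic : cs * cs⁻¹ = 1 := mul_inv_cancel₀ hcs0
  have e3' : (p:ℂ) ^ (k - 2) * rp = rp ^ 2 * cs⁻¹ := by
    linear_combination cs⁻¹ * e3 - (p:ℂ) ^ (k - 2) * rp * ic
  have e6 : (p:ℂ)⁻¹ = cs⁻¹ ^ 2 := by
    rw [← e5, ← inv_pow]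
  have key : (α + α⁻¹ - (cs + cs⁻¹)) * (β + β⁻¹ - (cs + cs⁻¹)) = 0 := by
    rw [hμ₁, hμ₂] at hrel
    have hrp2 : rp ^ 2 ≠ 0 := pow_ne_zero 2 hrp0
    have H : rp ^ 2 * ((α + α⁻¹ - (cs + cs⁻¹)) * (β + β⁻¹ - (cs + cs⁻¹))) = 0 := by
      linear_combination (norm := ring_nf) -hrel +
        ((α + α⁻¹) ^ 2 + (α + α⁻¹) * (β + β⁻¹) + (β + β⁻¹) ^ 2 - 2 - (p:ℂ)⁻¹) * e1 +
        (α + α⁻¹ + β + β⁻¹) * e2 + (α + α⁻¹ + β + β⁻¹) * e3' - e4 - rp ^ 2 * e6 +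
        2 * rp ^ 2 * ic
    exact (mul_eq_zero.1 H).resolve_left hrp2
  rcases mul_eq_zero.1 key with h | h
  · left
    rcases aux_inv_pair cs α hcs0 hα (by linear_combination h) with h' | h'
    · exact Or.inl h'
    · exact Or.inr (by rw [h', hcsdef]; exact (Complex.ofReal_inv s).symm)
  · right
    rcases aux_inv_pair cs β hcs0 hβ (by linear_combination h) with h' | h'
    · exact Or.inl h'
    · exact Or.inr (by rw [h', hcsdef]; exact (Complex.ofReal_inv s).symm)
end

section
/- Let p ≥ 17 be a prime, k ≥ 2 an integer, and let α, β be nonzero complex numbers satisfying the dichotomy: either |α| = |β| = 1, or α = p^{1/2} and |β| = 1. Set μ₂ = p^{2k-3}((α + α⁻¹)² + (α + α⁻¹)(β + β⁻¹) + (β + β⁻¹)² − 2 − 1/p), which is then real. Then μ₂ > 10·p^{2k-3} if and only if α = p^{1/2} and |β| = 1. -/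
/-- Let `p ≥ 17` be a prime, `k ≥ 2` an integer, and let `α, β` be nonzero
complex numbers satisfying the dichotomy: either `|α| = |β| = 1`, or `α = p^(1/2)` and
`|β| = 1`. Set `μ₂ = p^(2k-3) ((α+α⁻¹)² + (α+α⁻¹)(β+β⁻¹) + (β+β⁻¹)² − 2 − 1/p)`, which is
then real. Then `μ₂ > 10 p^(2k-3)` if and only if `α = p^(1/2)` and `|β| = 1`. -/
theorem stmt_10 (p : ℕ) (hp : Nat.Prime p) (hp17 : 17 ≤ p) (k : ℤ) (hk : 2 ≤ k)
    (α β : ℂ) (hα : α ≠ 0) (hβ : β ≠ 0)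
    (hdich : (‖α‖ = 1 ∧ ‖β‖ = 1) ∨
      (α = (Real.sqrt p : ℂ) ∧ ‖β‖ = 1)) :
    ∃ μ₂ : ℝ,
      (μ₂ : ℂ) = (((p : ℝ) ^ (2 * (k : ℝ) - 3) : ℝ) : ℂ) *
          ((α + α⁻¹) ^ 2 + (α + α⁻¹) * (β + β⁻¹) + (β + β⁻¹) ^ 2 - 2 - (p : ℂ)⁻¹) ∧
      (μ₂ > 10 * (p : ℝ) ^ (2 * (k : ℝ) - 3) ↔
        α = (Real.sqrt p : ℂ) ∧ ‖β‖ = 1) := by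
  have hpR : (17:ℝ) ≤ (p:ℝ) := by exact_mod_cast hp17
  have hp0 : (0:ℝ) < (p:ℝ) := by linarith
  set c : ℝ := (p:ℝ) ^ (2*(k:ℝ)-3) with hcdef
  have hc0 : 0 < c := Real.rpow_pos_of_pos hp0 _
  have hsqgt : (1:ℝ) < Real.sqrt p := by
    have h1 : Real.sqrt 1 < Real.sqrt p := Real.sqrt_lt_sqrt (by norm_num) (by linarith)
    simpa using h1
  rcases hdich with ⟨ha1, hb1⟩ | ⟨hasq, hb1⟩
  · -- Ramanujan case
    have hA : α + α⁻¹ = ((2*α.re : ℝ) : ℂ) := by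
      rw [Complex.inv_eq_conj ha1, Complex.add_conj]
    have hB : β + β⁻¹ = ((2*β.re : ℝ) : ℂ) := by
      rw [Complex.inv_eq_conj hb1, Complex.add_conj]
    set a : ℝ := 2*α.re with hadef
    set b : ℝ := 2*β.re with hbdef
    have hare : |α.re| ≤ 1 := by
      have := Complex.abs_re_le_norm α; rw [ha1] at this; exact this
    have hbre : |β.re| ≤ 1 := by
      have := Complex.abs_re_le_norm β; rw [hb1] at this; exact this
    obtain ⟨ha2, ha2'⟩ := abs_le.mp hare
    obtain ⟨hb2, hb2'⟩ := abs_le.mp hbre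
    have hinv : (0:ℝ) < (p:ℝ)⁻¹ := by positivity
    refine ⟨c * (a^2 + a*b + b^2 - 2 - (p:ℝ)⁻¹), ?_, ?_⟩
    · rw [hA, hB]; push_cast; ring
    · constructor
      · intro h
        exfalso
        have hE : a^2 + a*b + b^2 - 2 - (p:ℝ)⁻¹ < 10 := by
          nlinarith [mul_nonneg (by linarith : (0:ℝ) ≤ 1 - α.re) (by linarith : (0:ℝ) ≤ 1 - β.re),
            mul_nonneg (by linarith : (0:ℝ) ≤ 1 + α.re) (by linarith : (0:ℝ) ≤ 1 + β.re),
            mul_nonneg (by linarith : (0:ℝ) ≤ 1 - α.re) (by linarith : (0:ℝ) ≤ 1 + β.re),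
            mul_nonneg (by linarith : (0:ℝ) ≤ 1 + α.re) (by linarith : (0:ℝ) ≤ 1 - β.re)]
        have := (mul_lt_mul_iff_right₀ hc0).mpr hE
        nlinarith
      · rintro ⟨h1, -⟩
        exfalso
        rw [h1] at ha1
        rw [Complex.norm_real, Real.norm_eq_abs, abs_of_nonneg (Real.sqrt_nonneg _)] at ha1
        linarith
  · -- Saito-Kurokawa case
    set s : ℝ := Real.sqrt p with hsdef
    have hs0 : 0 < s := by linarith
    have hs2 : s^2 = p := Real.sq_sqrt hp0.le
    have hs4 : 4 < s := by nlinarith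
    set u : ℝ := s⁻¹ with hudef
    have hu0 : 0 < u := by positivity
    have hsu : s * u = 1 := mul_inv_cancel₀ hs0.ne'
    have hup : (p:ℝ)⁻¹ = u^2 := by
      rw [← hs2, hudef, inv_pow]
    have hA : α + α⁻¹ = ((s + u : ℝ) : ℂ) := by
      rw [hasq]; push_cast [hudef]; ring
    have hB : β + β⁻¹ = ((2*β.re : ℝ) : ℂ) := by
      rw [Complex.inv_eq_conj hb1, Complex.add_conj]
    set b : ℝ := 2*β.re with hbdef
    have hbre : |β.re| ≤ 1 := by
      have := Complex.abs_re_le_norm β; rw [hb1] at this; exact this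
    obtain ⟨hb2, hb2'⟩ := abs_le.mp hbre
    refine ⟨c * ((s+u)^2 + (s+u)*b + b^2 - 2 - (p:ℝ)⁻¹), ?_, ?_⟩
    · rw [hA, hB]; push_cast; ring
    · constructor
      · intro _; exact ⟨hasq, hb1⟩
      · rintro ⟨-, -⟩
        have hu4 : 4*u < 1 := by nlinarith
        have hE : 10 < (s+u)^2 + (s+u)*b + b^2 - 2 - (p:ℝ)⁻¹ := by
          rw [hup]
          nlinarith [mul_nonneg (by linarith : (0:ℝ) ≤ b + 2)
              (by nlinarith : (0:ℝ) ≤ b + s + u - 2),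
            mul_pos (by linarith : (0:ℝ) < s - 4) (by linarith : (0:ℝ) < s - 2), hsu]
        have := (mul_lt_mul_iff_right₀ hc0).mpr hE
        linarith
end

section
/- For a prime number p, setting s = √p + 1/√p, the following are equivalent: (a) for every real number y with |y| ≤ 2 one has s² + s·y + y² − 2 − 1/p > 10; (b) p ≥ 17. -/
/-- For a prime number `p`, setting `s = √p + 1/√p`, the following are
equivalent: (a) for every real `y` with `|y| ≤ 2` one has `s² + s y + y² − 2 − 1/p > 10`;
(b) `p ≥ 17`. -/
theorem stmt_12 (p : ℕ) (hp : Nat.Prime p) (s : ℝ) (hs : s = Real.sqrt p + (Real.sqrt p)⁻¹) :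
    (∀ y : ℝ, |y| ≤ 2 → s ^ 2 + s * y + y ^ 2 - 2 - (p : ℝ)⁻¹ > 10) ↔ 17 ≤ p := by
  have hp0 : (0:ℝ) < (p:ℝ) := by exact_mod_cast hp.pos
  set r := Real.sqrt p with hrdef
  have hr0 : 0 < r := Real.sqrt_pos.mpr hp0
  have hr2 : r ^ 2 = (p : ℝ) := Real.sq_sqrt hp0.le
  have hrne : r ≠ 0 := ne_of_gt hr0
  set u := r⁻¹ with hudef
  have hu : r * u = 1 := mul_inv_cancel₀ hrne
  have hu0 : 0 < u := inv_pos.mpr hr0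
  have hinv : ((p : ℝ))⁻¹ = u ^ 2 := by
    rw [← hr2, hudef, sq, sq, mul_inv]
  constructor
  · intro h
    by_contra hlt
    push_neg at hlt
    have hple : p ≤ 13 := by
      have h2 := hp.two_le
      interval_cases p <;> revert hp <;> decide
    have hr13 : r ^ 2 ≤ 13 := by rw [hr2]; exact_mod_cast hple
    have H := h (-2) (by norm_num)
    rw [hs, hinv] at H
    have hA : r ^ 2 - 2*r - 2*u - 6 > 0 := by nlinarith [H, hu]
    have hAr : (r ^ 2 - 2*r - 2*u - 6) * r > 0 := mul_pos hA hr0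
    have hBr : (13 - r ^ 2) * r ≥ 0 := mul_nonneg (by linarith) hr0.le
    nlinarith [hAr, hBr, hu, hA, hu0, hr13]
  · intro h17 y hy
    rw [abs_le] at hy
    have hr4 : 4 < r := by
      by_contra hc
      push_neg at hc
      have h17' : (17:ℝ) ≤ (p:ℝ) := by exact_mod_cast h17
      nlinarith [hr2]
    rw [hs, hinv]
    rw [gt_iff_lt, ← sub_pos]
    have key : 0 ≤ (y + 2) * (y + (r + u) - 2) := by
      have h1 : 0 ≤ y + 2 := by linarith [hy.1]
      nlinarith
    have hu4 : u < 1/4 := by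
      nlinarith [hu, hu0]
    have hbase : (r + u) ^ 2 + (r + u) * (-2) + (-2:ℝ) ^ 2 - 2 - u ^ 2 - 10 > 0 := by
      nlinarith [hu, hu0, hu4]
    nlinarith [key, hbase]
end

section
/- Let p be a prime and let α, β be complex numbers with |α| = |β| = 1. Let c_r (r ≥ 0) denote the coefficients of the formal power series expansion of (1 − p⁻¹·X²) / ((1 − α·X)(1 − α⁻¹·X)(1 − β·X)(1 − β⁻¹·X)) over ℂ. Then for every r ≥ 0, |c_r| ≤ C(r+3, 3) + p⁻¹·C(r+1, 3), where C(n, 3) denotes the binomial coefficient n choose 3. -/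
open PowerSeries Finset

lemma key13 (a : ℂ) : (1 - PowerSeries.C a * PowerSeries.X) * PowerSeries.mk (fun n => a^n) = 1 := by
  ext n
  rw [sub_mul, one_mul, map_sub, mul_assoc]
  cases n with
  | zero => simp
  | succ n =>
    rw [coeff_C_mul, coeff_succ_X_mul, coeff_mk, coeff_mk, pow_succ']
    simp [PowerSeries.coeff_one]

lemma hock13 (k n : ℕ) : ∑ i ∈ Finset.range (n+1), (i+k).choose k = (n+k+1).choose (k+1) := by
  induction n with
  | zero => simp
  | succ n ih =>
    rw [Finset.sum_range_succ, ih]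
    have h1 : (n+k+2).choose (k+1) = (n+k+1).choose k + (n+k+1).choose (k+1) :=
      Nat.choose_succ_succ _ _
    have h2 : n+1+k = n+k+1 := by ring
    rw [h2, show n+k+1+1 = n+k+2 from rfl]
    omega

lemma bmul13 (f g : PowerSeries ℂ) (A B : ℕ → ℝ)
    (hA : ∀ n, ‖PowerSeries.coeff n f‖ ≤ A n)
    (hB : ∀ n, ‖PowerSeries.coeff n g‖ ≤ B n) (n : ℕ) :
    ‖PowerSeries.coeff n (f*g)‖ ≤
      ∑ ij ∈ Finset.HasAntidiagonal.antidiagonal n, A ij.1 * B ij.2 := by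
  rw [PowerSeries.coeff_mul]
  refine (norm_sum_le _ _).trans ?_
  refine Finset.sum_le_sum fun ij _ => ?_
  rw [norm_mul]
  exact mul_le_mul (hA _) (hB _) (norm_nonneg _) ((norm_nonneg _).trans (hA _))

lemma step13 (f : PowerSeries ℂ) (k : ℕ)
    (hf : ∀ n, ‖PowerSeries.coeff n f‖ ≤ ((n+k).choose k : ℝ))
    (a : ℂ) (ha : ‖a‖ = 1) (n : ℕ) :
    ‖PowerSeries.coeff n (f * PowerSeries.mk (fun m => a^m))‖ ≤
      ((n+k+1).choose (k+1) : ℝ) := by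
  have hB : ∀ m, ‖PowerSeries.coeff m (PowerSeries.mk (fun m => a^m))‖ ≤ 1 := by
    intro m; rw [coeff_mk, norm_pow, ha, one_pow]
  refine (bmul13 f _ (fun m => ((m+k).choose k : ℝ)) (fun _ => 1) hf hB n).trans ?_
  rw [Finset.Nat.sum_antidiagonal_eq_sum_range_succ_mk]
  simp only [mul_one]
  rw [← Nat.cast_sum, hock13]

/-- Let `p` be a prime and `α, β` complex numbers with `|α| = |β| = 1`. Let
`c_r` denote the coefficients of the formal power series
`(1 − p⁻¹ X²) / ((1 − αX)(1 − α⁻¹X)(1 − βX)(1 − β⁻¹X))` over `ℂ`. Then for every `r ≥ 0`,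
`|c_r| ≤ C(r+3, 3) + p⁻¹ C(r+1, 3)`. -/
theorem stmt_13 (p : ℕ) (hp : Nat.Prime p) (α β : ℂ)
    (hα : ‖α‖ = 1) (hβ : ‖β‖ = 1)
    (f : PowerSeries ℂ)
    (hf : f = (1 - PowerSeries.C (p : ℂ)⁻¹ * PowerSeries.X ^ 2) *
        ((1 - PowerSeries.C α * PowerSeries.X) *
          (1 - PowerSeries.C α⁻¹ * PowerSeries.X) *
          (1 - PowerSeries.C β * PowerSeries.X) *
          (1 - PowerSeries.C β⁻¹ * PowerSeries.X))⁻¹) :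
    ∀ r : ℕ, ‖PowerSeries.coeff r f‖ ≤
      ((r + 3).choose 3 : ℝ) + (p : ℝ)⁻¹ * ((r + 1).choose 3 : ℝ) := by
  have hα' : ‖α⁻¹‖ = 1 := by rw [norm_inv, hα, inv_one]
  have hβ' : ‖β⁻¹‖ = 1 := by rw [norm_inv, hβ, inv_one]
  set g := (1 - PowerSeries.C α * PowerSeries.X) *
          (1 - PowerSeries.C α⁻¹ * PowerSeries.X) *
          (1 - PowerSeries.C β * PowerSeries.X) *
          (1 - PowerSeries.C β⁻¹ * PowerSeries.X) with hg
  set h := PowerSeries.mk (fun m => α^m) * PowerSeries.mk (fun m => α⁻¹^m) *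
      PowerSeries.mk (fun m => β^m) * PowerSeries.mk (fun m => β⁻¹^m) with hh
  have hgh : h * g = 1 := by
    have : h * g = ((1 - PowerSeries.C α * PowerSeries.X) * PowerSeries.mk (fun m => α^m)) *
        (((1 - PowerSeries.C α⁻¹ * PowerSeries.X) * PowerSeries.mk (fun m => α⁻¹^m)) *
        (((1 - PowerSeries.C β * PowerSeries.X) * PowerSeries.mk (fun m => β^m)) *
        ((1 - PowerSeries.C β⁻¹ * PowerSeries.X) * PowerSeries.mk (fun m => β⁻¹^m)))) := by
      rw [hg, hh]; ring
    rw [this, key13, key13, key13, key13]; ring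
  have hc : PowerSeries.constantCoeff g ≠ 0 := by
    rw [hg]; simp
  have hinv : g⁻¹ = h := ((PowerSeries.eq_inv_iff_mul_eq_one hc).mpr hgh).symm
  rw [hinv] at hf
  -- bound on coefficients of h
  have hbh : ∀ n, ‖PowerSeries.coeff n h‖ ≤ ((n+3).choose 3 : ℝ) := by
    have b0 : ∀ n, ‖PowerSeries.coeff n (PowerSeries.mk (fun m => α^m))‖ ≤
        ((n+0).choose 0 : ℝ) := by
      intro n; rw [coeff_mk, norm_pow, hα, one_pow]; simp
    have b1 := step13 _ 0 b0 α⁻¹ hα'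
    have b2 := step13 _ 1 b1 β hβ
    have b3 := step13 _ 2 b2 β⁻¹ hβ'
    intro n; exact b3 n
  have hpnn : (0:ℝ) ≤ (p : ℝ)⁻¹ := by positivity
  intro r
  have hcoeff : (PowerSeries.coeff r) f =
      (PowerSeries.coeff r) h - (p:ℂ)⁻¹ * (PowerSeries.coeff r) (PowerSeries.X^2 * h) := by
    rw [hf, sub_mul, one_mul, map_sub, mul_assoc, PowerSeries.coeff_C_mul]
  match r with
  | 0 =>
    have hx : (PowerSeries.coeff 0) (PowerSeries.X^2 * h) = 0 := by
      simp [PowerSeries.coeff_X_pow_mul']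
    rw [hcoeff, hx, mul_zero, sub_zero]
    have h1 := hbh 0
    have h2 : (0:ℝ) ≤ (p:ℝ)⁻¹ * (((0+1).choose 3 : ℕ) : ℝ) :=
      mul_nonneg hpnn (Nat.cast_nonneg _)
    linarith
  | 1 =>
    have hx : (PowerSeries.coeff 1) (PowerSeries.X^2 * h) = 0 := by
      simp [PowerSeries.coeff_X_pow_mul']
    rw [hcoeff, hx, mul_zero, sub_zero]
    have h1 := hbh 1
    have h2 : (0:ℝ) ≤ (p:ℝ)⁻¹ * (((1+1).choose 3 : ℕ) : ℝ) :=
      mul_nonneg hpnn (Nat.cast_nonneg _)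
    linarith
  | (d+2) =>
    have hx : (PowerSeries.coeff (d+2)) (PowerSeries.X^2 * h) = (PowerSeries.coeff d) h :=
      PowerSeries.coeff_X_pow_mul h 2 d
    rw [hcoeff, hx]
    refine (norm_sub_le _ _).trans ?_
    have h1 := hbh (d+2)
    have h2 : ‖(p:ℂ)⁻¹ * (PowerSeries.coeff d) h‖ ≤ (p:ℝ)⁻¹ * ((d+3).choose 3 : ℝ) := by
      rw [norm_mul, norm_inv, Complex.norm_natCast]
      exact mul_le_mul_of_nonneg_left (hbh d) hpnn
    have e1 : d+2+3 = d+2+3 := rfl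
    have e2 : d+2+1 = d+3 := rfl
    rw [e2]
    exact add_le_add h1 h2
end

section
/- Let p be a prime, and let α, β be nonzero complex numbers with μ₁ = p^{k-3/2}(α + α⁻¹ + β + β⁻¹) for an integer k ≥ 2. Suppose μ₂ = p^{2k-3}((α + α⁻¹)² + (α + α⁻¹)(β + β⁻¹) + (β + β⁻¹)² − 2 − 1/p) satisfies μ₂ = μ₁² − (p^{k-1} + p^{k-2})·μ₁ + p^{2k-2}. Set Z₁ = p^{k-3/2}(p^{1/2} + p^{-1/2}) and Z₂ = p^{k-3/2}(α + α⁻¹). Then Z₁ + Z₂ = μ₁ or Z₁ = Z₂. -/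
/-- Let `p` be a prime and `α, β` nonzero complex numbers with
`μ₁ = p^(k-3/2) (α + α⁻¹ + β + β⁻¹)` for an integer `k ≥ 2`. Suppose
`μ₂ = p^(2k-3) ((α+α⁻¹)² + (α+α⁻¹)(β+β⁻¹) + (β+β⁻¹)² − 2 − 1/p)` satisfies
`μ₂ = μ₁² − (p^(k-1) + p^(k-2)) μ₁ + p^(2k-2)`. Set `Z₁ = p^(k-3/2) (p^(1/2) + p^(-1/2))`
and `Z₂ = p^(k-3/2) (α + α⁻¹)`. Then `Z₁ + Z₂ = μ₁` or `Z₁ = Z₂`. -/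
theorem stmt_15 (p : ℕ) (hp : Nat.Prime p) (k : ℤ) (hk : 2 ≤ k)
    (α β : ℂ) (hα : α ≠ 0) (hβ : β ≠ 0)
    (μ₁ μ₂ : ℂ)
    (hμ₁ : μ₁ = (((p : ℝ) ^ ((k : ℝ) - 3 / 2) : ℝ) : ℂ) * (α + α⁻¹ + β + β⁻¹))
    (hμ₂ : μ₂ = (((p : ℝ) ^ (2 * (k : ℝ) - 3) : ℝ) : ℂ) *
        ((α + α⁻¹) ^ 2 + (α + α⁻¹) * (β + β⁻¹) + (β + β⁻¹) ^ 2 - 2 - (p : ℂ)⁻¹))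
    (hrel : μ₂ = μ₁ ^ 2 - ((p : ℂ) ^ (k - 1) + (p : ℂ) ^ (k - 2)) * μ₁ + (p : ℂ) ^ (2 * k - 2))
    (Z₁ Z₂ : ℂ)
    (hZ₁ : Z₁ = (((p : ℝ) ^ ((k : ℝ) - 3 / 2) : ℝ) : ℂ) *
        ((Real.sqrt p : ℂ) + ((Real.sqrt p : ℝ)⁻¹ : ℝ)))
    (hZ₂ : Z₂ = (((p : ℝ) ^ ((k : ℝ) - 3 / 2) : ℝ) : ℂ) * (α + α⁻¹)) :
    Z₁ + Z₂ = μ₁ ∨ Z₁ = Z₂ := by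
  have hp0 : (0:ℝ) < (p:ℝ) := by exact_mod_cast hp.pos
  set P : ℝ := (p : ℝ) ^ ((k : ℝ) - 3 / 2) with hPdef
  have hPpos : 0 < P := Real.rpow_pos_of_pos hp0 _
  have hPne : (P : ℂ) ≠ 0 := by exact_mod_cast (ne_of_gt hPpos)
  have hsq : Real.sqrt p * Real.sqrt p = (p:ℝ) := Real.mul_self_sqrt hp0.le
  have hsqpos : 0 < Real.sqrt p := Real.sqrt_pos.mpr hp0
  have hsqrp : Real.sqrt p = (p:ℝ) ^ ((1:ℝ)/2) := Real.sqrt_eq_rpow _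
  have hsqinv : (Real.sqrt p)⁻¹ = (p:ℝ) ^ (-(1/2) : ℝ) := by
    rw [hsqrp, ← Real.rpow_neg hp0.le]
  have hr1 : P * Real.sqrt p = (p:ℝ) ^ ((k:ℝ) - 1) := by
    rw [hsqrp, hPdef, ← Real.rpow_add hp0,
      show (k:ℝ) - 3/2 + 1/2 = (k:ℝ) - 1 by ring]
  have hr2 : P * (Real.sqrt p)⁻¹ = (p:ℝ) ^ ((k:ℝ) - 2) := by
    rw [hsqinv, hPdef, ← Real.rpow_add hp0,
      show (k:ℝ) - 3/2 + -(1/2) = (k:ℝ) - 2 by ring]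
  have hr3 : P * P = (p:ℝ) ^ (2*(k:ℝ) - 3) := by
    rw [hPdef, ← Real.rpow_add hp0,
      show (k:ℝ) - 3/2 + ((k:ℝ) - 3/2) = 2*(k:ℝ) - 3 by ring]
  have hzc : ∀ m : ℤ, ((p : ℂ) ^ m) = (((p:ℝ) ^ ((m : ℝ)) : ℝ) : ℂ) := by
    intro m
    rw [Real.rpow_intCast]
    push_cast
    ring
  have h1 : (p : ℂ) ^ (k - 1) = (P : ℂ) * (Real.sqrt p : ℂ) := by
    rw [hzc]
    have : (((k - 1 : ℤ)) : ℝ) = (k:ℝ) - 1 := by push_cast; ring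
    rw [this, ← hr1]; push_cast; ring
  have h2 : (p : ℂ) ^ (k - 2) = (P : ℂ) * (((Real.sqrt p)⁻¹ : ℝ) : ℂ) := by
    rw [hzc]
    have : (((k - 2 : ℤ)) : ℝ) = (k:ℝ) - 2 := by push_cast; ring
    rw [this, ← hr2]; push_cast; ring
  have h3 : (p : ℂ) ^ (2 * k - 2) = (P : ℂ) * (P : ℂ) * (p : ℂ) := by
    rw [hzc]
    have : (((2 * k - 2 : ℤ)) : ℝ) = (2*(k:ℝ) - 3) + 1 := by push_cast; ring
    rw [this, Real.rpow_add hp0, ← hr3, Real.rpow_one]; push_cast; ring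
  have hP2 : (((p:ℝ) ^ (2 * (k:ℝ) - 3) : ℝ) : ℂ) = (P : ℂ) * (P : ℂ) := by
    rw [← hr3]; push_cast; ring
  -- abbreviations
  set A : ℂ := α + α⁻¹
  set B : ℂ := β + β⁻¹
  set s : ℂ := (Real.sqrt p : ℂ)
  set t : ℂ := (((Real.sqrt p)⁻¹ : ℝ) : ℂ)
  have hsne : s ≠ 0 := by simp only [s]; exact_mod_cast hsqpos.ne'
  have hst : s * t = 1 := by
    rw [show t = s⁻¹ by simp [t, s], mul_inv_cancel₀ hsne]
  have hs2 : s * s = (p:ℂ) := by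
    rw [show s * s = ((Real.sqrt p * Real.sqrt p : ℝ) : ℂ) by push_cast; ring, hsq]
    norm_num
  have hpC : (p:ℂ) ≠ 0 := by exact_mod_cast hp.pos.ne'
  have ht2 : t * t = (p:ℂ)⁻¹ := by
    have : s * s * (t * t) = (p:ℂ) * (t * t) := by rw [hs2]
    have h' : s * s * (t * t) = 1 := by
      rw [show s * s * (t * t) = (s*t)*(s*t) by ring, hst]; ring
    field_simp
    calc t ^ 2 * (p:ℂ) = s * s * (t*t) := by rw [hs2]; ring
    _ = 1 := h'
  -- main equation
  have key : (P:ℂ) * (P:ℂ) * ((A - (s + t)) * (B - (s + t))) = 0 := by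
    have hrel' := hrel
    rw [hμ₁, hμ₂, hP2, h1, h2, h3] at hrel'
    linear_combination (-1 : ℂ) * hrel' + (P:ℂ)^2 * hs2 + (P:ℂ)^2 * ht2 +
      2 * (P:ℂ)^2 * hst
  have key2 : (A - (s + t)) * (B - (s + t)) = 0 := by
    have := mul_eq_zero.mp key
    rcases this with h | h
    · exact absurd h (by simpa using mul_ne_zero hPne hPne)
    · exact h
  rcases mul_eq_zero.mp key2 with h | h
  · right
    rw [hZ₁, hZ₂]
    have hA : α + α⁻¹ = s + t := sub_eq_zero.mp h
    show (P:ℂ) * (s + t) = (P:ℂ) * (α + α⁻¹)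
    linear_combination (-(P:ℂ)) * hA
  · left
    rw [hZ₁, hZ₂, hμ₁]
    have hB : β + β⁻¹ = s + t := sub_eq_zero.mp h
    show (P:ℂ) * (s + t) + (P:ℂ) * (α + α⁻¹) = (P:ℂ) * (α + α⁻¹ + β + β⁻¹)
    linear_combination (-(P:ℂ)) * hB
end
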